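/- arXiv:2511.15372 — 6 statements merged into one kernel-verified Lean document; each statement's English description precedes it below -/
import Mathlib

section
/- Let q be a prime power, k ≥ 2, and let α₁, …, α_{k-1} ∈ L be R-independent. Then the set S = {K·x : x ∈ α_i·(R∖{0}) for some i = 1, …, k-1} of points of PG(k-1, q^{k-1}) is a strong blocking set: every (k-1)-dimensional K-subspace of L equals the K-linear span of the union of the points of S it contains. -/
/-- Let `q` be a prime power, `k ≥ 2`, `L` the finite field with `q^{k(k-1)}` elements,
`K` its subfield with `q^{k-1}` elements and `F` its subfield with `q^k` elements, and
`R = {x·y : x ∈ K, y ∈ F}`.  If `α₁, …, α_{k-1} ∈ L` are `R`-independent, then the set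
`S = {K·x : x ∈ αᵢ·R*, 1 ≤ i ≤ k-1}` of points of `PG(k-1, q^{k-1})` (the projective space
of `L` viewed as a `K`-vector space of dimension `k`) is a strong blocking set: every
hyperplane (a `(k-1)`-dimensional `K`-subspace of `L`) equals the `K`-linear span of the
union of the points of `S` it contains. -/
theorem R_independent_implies_strong_blocking
    (p h q k : ℕ) (hp : p.Prime) (hh : 1 ≤ h) (hq : q = p ^ h) (hk : 2 ≤ k)
    (L : Type) [Field L] [Finite L] (hL : Nat.card L = q ^ (k * (k - 1)))
    (K F : Subfield L) (hK : Nat.card K = q ^ (k - 1)) (hF : Nat.card F = q ^ k)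
    (R : Set L) (hR : R = {z | ∃ x ∈ K, ∃ y ∈ F, z = x * y})
    (α : Fin (k - 1) → L)
    (hindep : ∀ ρ : Fin (k - 1) → L, (∀ i, ρ i ∈ R) →
      ∑ i, ρ i * α i = 0 → ∀ i, ρ i = 0)
    (S : Set (Submodule ↥K L))
    (hS : S = {P | ∃ (i : Fin (k - 1)) (ρ : L), ρ ∈ R ∧ ρ ≠ 0 ∧
      P = Submodule.span ↥K {α i * ρ}}) :
    ∀ W : Submodule ↥K L, Module.finrank ↥K ↥W = k - 1 →
      W = Submodule.span ↥K (⋃ P ∈ {P ∈ S | P ≤ W}, (P : Set L)) := by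
  intro W hW
  classical
  have hq2 : 2 ≤ q := hq ▸ hp.two_le.trans (Nat.le_self_pow (by omega) p)
  letI : Fintype L := Fintype.ofFinite L
  letI : Fintype ↥K := Fintype.ofFinite ↥K
  letI : Fintype ↥F := Fintype.ofFinite ↥F
  letI : Fintype (L ⧸ W) := Fintype.ofFinite _
  have hcL : Fintype.card L = Fintype.card ↥K ^ Module.finrank ↥K L :=
    Module.card_eq_pow_finrank
  have hcK : Fintype.card ↥K = q ^ (k - 1) := by
    rw [← Nat.card_eq_fintype_card]; exact hK
  have hcF : Fintype.card ↥F = q ^ k := by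
    rw [← Nat.card_eq_fintype_card]; exact hF
  have hcL' : Fintype.card L = q ^ (k * (k - 1)) := by
    rw [← Nat.card_eq_fintype_card]; exact hL
  -- finrank of L over K is k
  have hfin : Module.finrank ↥K L = k := by
    have h1 : q ^ (k * (k - 1)) = q ^ ((k - 1) * Module.finrank ↥K L) := by
      rw [← hcL', hcL, hcK, ← pow_mul]
    have h2 := Nat.pow_right_injective hq2 h1
    rw [mul_comm] at h2
    exact (Nat.eq_of_mul_eq_mul_left (by omega : 0 < k - 1) h2).symm
  -- the quotient L ⧸ W has q^(k-1) elements
  have hcQ : Fintype.card (L ⧸ W) = q ^ (k - 1) := by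
    have h3 : Module.finrank ↥K (L ⧸ W) + Module.finrank ↥K ↥W
        = Module.finrank ↥K L := Submodule.finrank_quotient_add_finrank W
    have h4 : Module.finrank ↥K (L ⧸ W) = 1 := by
      rw [hW, hfin] at h3; omega
    have h5 : Fintype.card (L ⧸ W) = Fintype.card ↥K ^ Module.finrank ↥K (L ⧸ W) :=
      Module.card_eq_pow_finrank
    rw [h5, h4, hcK, pow_one]
  -- for each i, find a nonzero y ∈ F with α i * y ∈ W
  have hexists : ∀ i : Fin (k - 1), ∃ y : ↥F, y ≠ 0 ∧ α i * (y : L) ∈ W := by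
    intro i
    obtain ⟨y₁, y₂, hne, heq⟩ := Fintype.exists_ne_map_eq_of_card_lt
      (fun y : ↥F => Submodule.Quotient.mk (p := W) (α i * (y : L)))
      (by rw [hcQ, hcF]; exact Nat.pow_lt_pow_right hq2 (by omega))
    refine ⟨y₁ - y₂, sub_ne_zero.mpr hne, ?_⟩
    have := (Submodule.Quotient.eq W).mp heq
    have hsub : α i * ((y₁ : L) - (y₂ : L)) = α i * (y₁ : L) - α i * (y₂ : L) := by ring
    rw [Subfield.coe_sub, hsub]
    exact this
  choose y hy0 hyW using hexists
  set v : Fin (k - 1) → L := fun i => α i * (y i : L) with hv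
  -- the v i are linearly independent over K
  have hli : LinearIndependent ↥K v := by
    rw [Fintype.linearIndependent_iff]
    intro g hg
    have hρmem : ∀ i, ((g i : L) * (y i : L)) ∈ R := by
      intro i
      rw [hR]
      exact ⟨(g i : L), (g i).2, (y i : L), (y i).2, rfl⟩
    have hsum : ∑ i, ((g i : L) * (y i : L)) * α i = 0 := by
      rw [← hg]
      apply Finset.sum_congr rfl
      intro i _
      show (g i : L) * (y i : L) * α i = (g i : L) * v i
      rw [hv]; ring
    have hz := hindep _ hρmem hsum
    intro i
    have hyne : (y i : L) ≠ 0 := by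
      simpa using hy0 i
    have : (g i : L) = 0 := by
      rcases mul_eq_zero.mp (hz i) with h' | h'
      · exact h'
      · exact absurd h' hyne
    exact Subtype.ext this
  -- span of the v i equals W
  have hTle : Submodule.span ↥K (Set.range v) ≤ W := by
    rw [Submodule.span_le]
    rintro _ ⟨i, rfl⟩
    exact hyW i
  have hTrank : Module.finrank ↥K ↥(Submodule.span ↥K (Set.range v)) = k - 1 := by
    rw [finrank_span_eq_card hli, Fintype.card_fin]
  have hTW : Submodule.span ↥K (Set.range v) = W :=
    Submodule.eq_of_le_of_finrank_le hTle (by rw [hW, hTrank])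
  -- the span of the points inside W
  set V := Submodule.span ↥K (⋃ P ∈ {P ∈ S | P ≤ W}, (P : Set L)) with hVdef
  have hVle : V ≤ W := by
    rw [hVdef, Submodule.span_le]
    intro x hx
    simp only [Set.mem_iUnion] at hx
    obtain ⟨P, ⟨_, hPW⟩, hxP⟩ := hx
    exact hPW hxP
  have hTleV : Submodule.span ↥K (Set.range v) ≤ V := by
    rw [Submodule.span_le]
    rintro _ ⟨i, rfl⟩
    apply Submodule.subset_span
    simp only [Set.mem_iUnion]
    refine ⟨Submodule.span ↥K {v i}, ⟨?_, ?_⟩, ?_⟩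
    · rw [hS]
      exact ⟨i, (y i : L), by rw [hR]; exact ⟨1, one_mem K, (y i : L), (y i).2, (one_mul _).symm⟩,
        by simpa using hy0 i, rfl⟩
    · rw [Submodule.span_le]
      intro x hx
      rw [Set.mem_singleton_iff] at hx
      rw [hx]
      exact hyW i
    · exact Submodule.mem_span_singleton_self (v i)
  exact le_antisymm (by rw [← hTW]; exact hTleV) hVle
end

section
/- Let q be a prime power and k ≥ 2. If B(k,q) is not a blocking set of PG(k-2, q^{k(k-1)}) — that is, if there exists a (k-2)-dimensional L-subspace of L^{k-1} containing no nonzero vector of R^{k-1} — then there exist α₁, …, α_{k-1} ∈ L ∖ {0} such that the set S = {K·x : x ∈ α_i·(R∖{0}) for some i = 1, …, k-1} of points of PG(k-1, q^{k-1}) is a strong blocking set. -/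
set_option maxHeartbeats 1000000 in
/-- Let `q` be a prime power and `k ≥ 2`, `L` the finite field with `q^{k(k-1)}` elements,
`K` its subfield with `q^{k-1}` elements and `F` its subfield with `q^k` elements, and
`R = {x·y : x ∈ K, y ∈ F}`.  If `B(k,q)` is not a blocking set of `PG(k-2, q^{k(k-1)})`,
i.e. there is a hyperplane (a `(k-2)`-dimensional `L`-subspace of `L^{k-1}`) containing no
nonzero vector of `R^{k-1}`, then there exist `α₁, …, α_{k-1} ∈ L ∖ {0}` such that the set
`S = {K·x : x ∈ αᵢ·R*, 1 ≤ i ≤ k-1}` of points of `PG(k-1, q^{k-1})` (the projective space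
of `L` viewed as a `K`-vector space of dimension `k`) is a strong blocking set. -/
theorem not_blocking_implies_strong_blocking_from_subgeometries
    (p h q k : ℕ) (hp : p.Prime) (hh : 1 ≤ h) (hq : q = p ^ h) (hk : 2 ≤ k)
    (L : Type) [Field L] [Finite L] (hL : Nat.card L = q ^ (k * (k - 1)))
    (K F : Subfield L) (hK : Nat.card K = q ^ (k - 1)) (hF : Nat.card F = q ^ k)
    (R : Set L) (hR : R = {z | ∃ x ∈ K, ∃ y ∈ F, z = x * y})
    (hnotblock : ∃ W : Submodule L (Fin (k - 1) → L), Module.finrank L ↥W = k - 2 ∧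
      ∀ v ∈ W, (∀ i, v i ∈ R) → v = 0) :
    ∃ α : Fin (k - 1) → L, (∀ i, α i ≠ 0) ∧
      ∀ W : Submodule ↥K L, Module.finrank ↥K ↥W = k - 1 →
        W = Submodule.span ↥K (⋃ P ∈ {P | (∃ (i : Fin (k - 1)) (ρ : L), ρ ∈ R ∧ ρ ≠ 0 ∧
          P = Submodule.span ↥K {α i * ρ}) ∧ P ≤ W}, (P : Set L)) := by
  classical
  obtain ⟨W, hWrank, hW⟩ := hnotblock
  have hq2 : 2 ≤ q := by
    rw [hq]
    calc 2 ≤ p := hp.two_le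
    _ ≤ p ^ h := Nat.le_self_pow (by omega) p
  -- ambient dimension over L
  have hfr : Module.finrank L (Fin (k - 1) → L) = k - 1 := by
    simp [Module.finrank_pi]
  -- the quotient by W is one-dimensional
  have hQ : Module.finrank L ((Fin (k - 1) → L) ⧸ W) = 1 := by
    have h1 := W.finrank_quotient_add_finrank
    rw [hWrank, hfr] at h1
    omega
  obtain ⟨ψ⟩ := FiniteDimensional.nonempty_linearEquiv_of_finrank_eq
    (R := L) (M := ((Fin (k - 1) → L) ⧸ W)) (M' := L)
    (by rw [hQ, Module.finrank_self])
  set φ : (Fin (k - 1) → L) →ₗ[L] L := ψ.toLinearMap ∘ₗ W.mkQ with hφ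
  have hker : LinearMap.ker φ = W := by
    rw [hφ, LinearMap.ker_comp]
    rw [show LinearMap.ker ψ.toLinearMap = ⊥ from LinearMap.ker_eq_bot.mpr ψ.injective]
    rw [Submodule.comap_bot, Submodule.ker_mkQ]
  set α : Fin (k - 1) → L := fun i => φ fun j => if i = j then 1 else 0 with hαdef
  have hmemR0 : (0 : L) ∈ R := by rw [hR]; exact ⟨0, K.zero_mem, 0, F.zero_mem, by ring⟩
  have hmemR1 : (1 : L) ∈ R := by rw [hR]; exact ⟨1, K.one_mem, 1, F.one_mem, by ring⟩
  have hα : ∀ i, α i ≠ 0 := by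
    intro i h0
    have hmem : (fun j => if i = j then (1:L) else 0) ∈ W := by
      rw [← hker]; exact LinearMap.mem_ker.mpr h0
    have hz := hW _ hmem (by
      intro j
      by_cases hij : i = j <;> simp [hij, hmemR0, hmemR1])
    have h1 := congrFun hz i
    simp at h1
  refine ⟨α, hα, ?_⟩
  intro Wk hWk
  -- dimension of L over K
  cases nonempty_fintype L
  haveI : Fintype ↥K := Fintype.ofFinite _
  haveI : Fintype ↥F := Fintype.ofFinite _
  have hdim : Module.finrank ↥K L = k := by
    have hc : Fintype.card L = Fintype.card ↥K ^ Module.finrank ↥K L :=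
      Module.card_eq_pow_finrank
    rw [← Nat.card_eq_fintype_card, ← Nat.card_eq_fintype_card, hL, hK, ← pow_mul] at hc
    have h2 := Nat.pow_right_injective hq2 hc
    have h3 : (k - 1) * k = (k - 1) * Module.finrank ↥K L := by
      rw [mul_comm (k-1) k]; exact h2
    exact Nat.eq_of_mul_eq_mul_left (show 0 < k - 1 by omega) h3.symm
  have hQk : Module.finrank ↥K (L ⧸ Wk) = 1 := by
    have h1 := Wk.finrank_quotient_add_finrank
    rw [hWk, hdim] at h1
    omega
  have hcardQ : Nat.card (L ⧸ Wk) = q ^ (k - 1) := by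
    haveI : Fintype (L ⧸ Wk) := Fintype.ofFinite _
    rw [Nat.card_eq_fintype_card, Module.card_eq_pow_finrank (K := ↥K), hQk, pow_one,
      ← Nat.card_eq_fintype_card, hK]
  -- pigeonhole: each subgeometry meets Wk
  have hpig : ∀ i : Fin (k - 1), ∃ y : L, y ∈ F ∧ y ≠ 0 ∧ α i * y ∈ Wk := by
    intro i
    haveI : Fintype (L ⧸ Wk) := Fintype.ofFinite _
    have hlt : Fintype.card (L ⧸ Wk) < Fintype.card ↥F := by
      rw [← Nat.card_eq_fintype_card, ← Nat.card_eq_fintype_card, hcardQ, hF]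
      exact Nat.pow_lt_pow_right hq2 (by omega)
    obtain ⟨y1, y2, hne, heq⟩ := Fintype.exists_ne_map_eq_of_card_lt
      (fun y : ↥F => Submodule.Quotient.mk (p := Wk) (α i * (y : L))) hlt
    refine ⟨(y1 : L) - (y2 : L), sub_mem y1.2 y2.2, ?_, ?_⟩
    · intro h0
      exact hne (Subtype.ext (by linear_combination h0))
    · have hd := (Submodule.Quotient.eq Wk).mp heq
      rw [mul_sub]
      exact hd
  choose y hyF hyne hyW using hpig
  by_contra hne
  set Sset : Set L := ⋃ P ∈ {P : Submodule ↥K L | (∃ (i : Fin (k - 1)) (ρ : L), ρ ∈ R ∧ ρ ≠ 0 ∧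
      P = Submodule.span ↥K {α i * ρ}) ∧ P ≤ Wk}, (P : Set L) with hSset
  have hle : Submodule.span ↥K Sset ≤ Wk := by
    rw [Submodule.span_le, hSset]
    exact Set.iUnion₂_subset fun P hP => SetLike.coe_subset_coe.mpr hP.2
  have hmemS : ∀ i, α i * y i ∈ Submodule.span ↥K Sset := by
    intro i
    apply Submodule.subset_span
    rw [hSset]
    refine Set.mem_iUnion₂.mpr ⟨Submodule.span ↥K {α i * y i},
      ⟨⟨i, y i, ?_, hyne i, rfl⟩, ?_⟩, Submodule.mem_span_singleton_self _⟩
    · rw [hR]; exact ⟨1, K.one_mem, y i, hyF i, (one_mul _).symm⟩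
    · rw [Submodule.span_singleton_le_iff_mem]; exact hyW i
  have hlt2 : Module.finrank ↥K (Submodule.span ↥K Sset) < k - 1 := by
    rw [← hWk]
    exact Submodule.finrank_lt_finrank_of_lt (lt_of_le_of_ne hle (fun hh => hne hh.symm))
  have hnli : ¬ LinearIndependent ↥K
      (fun i : Fin (k - 1) => (⟨α i * y i, hmemS i⟩ : Submodule.span ↥K Sset)) := by
    intro hli
    have hcard := hli.fintype_card_le_finrank
    rw [Fintype.card_fin] at hcard
    omega
  obtain ⟨g, hgsum, i0, hgi0⟩ := Fintype.not_linearIndependent_iff.mp hnli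
  have hsumL : ∑ i, (g i : L) * (α i * y i) = 0 := by
    have hc := congrArg (fun x : ↥(Submodule.span ↥K Sset) => (x : L)) hgsum
    simpa [Subfield.smul_def] using hc
  set u : Fin (k - 1) → L := fun i => (g i : L) * y i with hu
  have huW : u ∈ W := by
    rw [← hker, LinearMap.mem_ker, LinearMap.pi_apply_eq_sum_univ]
    calc ∑ i, u i • (φ fun j => if i = j then 1 else 0)
        = ∑ i, (g i : L) * (α i * y i) := by
          refine Finset.sum_congr rfl fun i _ => ?_
          rw [hu, hαdef]
          simp only [smul_eq_mul]
          ring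
      _ = 0 := hsumL
  have hcoord : ∀ i, u i ∈ R := by
    intro i
    rw [hu, hR]
    exact ⟨g i, (g i).2, y i, hyF i, rfl⟩
  have hu0 := hW u huW hcoord
  have : (g i0 : L) * y i0 = 0 := by
    have := congrFun hu0 i0
    simpa [hu] using this
  rcases mul_eq_zero.mp this with h0 | h0
  · exact hgi0 (Subtype.ext h0)
  · exact hyne i0 h0
end

section
/- Let q be a prime power and k ≥ 2. Let v, w ∈ R^{k-1} be nonzero vectors with the same Hamming weight (i.e., the same number of nonzero coordinates). Then there exists an L-linear automorphism f of L^{k-1} such that f maps R^{k-1} bijectively onto R^{k-1} and f(v) = w. In particular, the setwise stabiliser of B(k,q) in PGL(k-1, q^{k(k-1)}) acts transitively on the points of B(k,q) of fixed weight. -/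
/-- Let `q` be a prime power and `k ≥ 2`, `L` the finite field with `q^{k(k-1)}` elements,
`K` its subfield with `q^{k-1}` elements and `F` its subfield with `q^k` elements, and
`R = {x·y : x ∈ K, y ∈ F}`.  If `v, w ∈ R^{k-1}` are nonzero vectors with the same Hamming
weight, then there is an `L`-linear automorphism `f` of `L^{k-1}` mapping `R^{k-1}`
bijectively onto itself with `f v = w`.  (In particular, the setwise stabiliser of `B(k,q)`
in `PGL(k-1, q^{k(k-1)})` acts transitively on points of `B(k,q)` of fixed weight.) -/
theorem stabiliser_transitive_on_fixed_weight
    (p h q k : ℕ) (hp : p.Prime) (hh : 1 ≤ h) (hq : q = p ^ h) (hk : 2 ≤ k)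
    (L : Type) [Field L] [Finite L] (hL : Nat.card L = q ^ (k * (k - 1)))
    (K F : Subfield L) (hK : Nat.card K = q ^ (k - 1)) (hF : Nat.card F = q ^ k)
    (R : Set L) (hR : R = {z | ∃ x ∈ K, ∃ y ∈ F, z = x * y})
    (v w : Fin (k - 1) → L) (hv0 : v ≠ 0) (hw0 : w ≠ 0)
    (hv : ∀ i, v i ∈ R) (hw : ∀ i, w i ∈ R)
    (hwt : Nat.card {i | v i ≠ 0} = Nat.card {i | w i ≠ 0}) :
    ∃ f : (Fin (k - 1) → L) ≃ₗ[L] (Fin (k - 1) → L),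
      (⇑f '' {u | ∀ i, u i ∈ R} = {u | ∀ i, u i ∈ R}) ∧ f v = w := by
  classical
  -- Basic closure properties of R
  have hone : (1 : L) ∈ R := by
    rw [hR]; exact ⟨1, one_mem K, 1, one_mem F, (one_mul 1).symm⟩
  have hmul : ∀ a b : L, a ∈ R → b ∈ R → a * b ∈ R := by
    intro a b ha hb
    rw [hR] at ha hb ⊢
    obtain ⟨x, hx, y, hy, rfl⟩ := ha
    obtain ⟨x', hx', y', hy', rfl⟩ := hb
    exact ⟨x * x', mul_mem hx hx', y * y', mul_mem hy hy', by ring⟩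
  have hinv : ∀ a : L, a ∈ R → a⁻¹ ∈ R := by
    intro a ha
    rw [hR] at ha ⊢
    obtain ⟨x, hx, y, hy, rfl⟩ := ha
    exact ⟨x⁻¹, inv_mem hx, y⁻¹, inv_mem hy, mul_inv x y⟩
  -- a permutation matching supports
  have hcard : Nat.card {i // v i ≠ 0} = Nat.card {i // w i ≠ 0} := hwt
  have hne : Nonempty ({i // v i ≠ 0} ≃ {i // w i ≠ 0}) := by
    exact Finite.card_eq.mp hcard
  obtain ⟨e⟩ := hne
  set σ : Equiv.Perm (Fin (k - 1)) := e.extendSubtype with hσ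
  have hmem : ∀ i, v i ≠ 0 → w (σ i) ≠ 0 := fun i hi => e.extendSubtype_mem i hi
  have hnmem : ∀ i, v i = 0 → w (σ i) = 0 := by
    intro i hi
    by_contra hc
    exact e.extendSubtype_not_mem i (by simp [hi]) hc
  -- scaling coefficients
  set c : Fin (k - 1) → L := fun i =>
    if v (σ.symm i) = 0 then 1 else w i / v (σ.symm i) with hc
  have hcR : ∀ i, c i ∈ R := by
    intro i
    by_cases hvi : v (σ.symm i) = 0
    · simp [hc, hvi, hone]
    · simp only [hc, hvi, if_false, div_eq_mul_inv]
      exact hmul _ _ (hw i) (hinv _ (hv _))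
  have hc0 : ∀ i, c i ≠ 0 := by
    intro i
    by_cases hvi : v (σ.symm i) = 0
    · simp [hc, hvi]
    · have hwi : w i ≠ 0 := by
        have := hmem (σ.symm i) hvi
        rwa [σ.apply_symm_apply] at this
      simp [hc, hvi, div_eq_zero_iff, hwi]
  -- the linear automorphism
  refine ⟨{ toFun := fun u i => c i * u (σ.symm i)
            invFun := fun u j => (c (σ j))⁻¹ * u (σ j)
            map_add' := by intro u u'; funext i; simp [mul_add]
            map_smul' := by intro a u; funext i; simp [smul_eq_mul]; ring
            left_inv := by
              intro u; funext j
              simp [σ.symm_apply_apply, inv_mul_cancel_left₀ (hc0 (σ j))]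
            right_inv := by
              intro u; funext i
              simp [σ.apply_symm_apply, mul_inv_cancel_left₀ (hc0 i)] }, ?_, ?_⟩
  · ext u
    simp only [Set.mem_image, Set.mem_setOf_eq, LinearEquiv.coe_mk]
    constructor
    · rintro ⟨a, ha, rfl⟩ i
      exact hmul _ _ (hcR i) (ha _)
    · intro hu
      refine ⟨fun j => (c (σ j))⁻¹ * u (σ j), fun j => hmul _ _ (hinv _ (hcR _)) (hu _), ?_⟩
      funext i
      show c i * ((c (σ (σ.symm i)))⁻¹ * u (σ (σ.symm i))) = u i
      rw [σ.apply_symm_apply, mul_inv_cancel_left₀ (hc0 i)]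
  · funext i
    simp only [LinearEquiv.coe_mk]
    by_cases hvi : v (σ.symm i) = 0
    · have : w i = 0 := by
        have := hnmem (σ.symm i) hvi
        rwa [σ.apply_symm_apply] at this
      simp [hc, hvi, this]
    · simp [hc, hvi, div_mul_cancel₀ _ hvi]
end

section
/- Let q be a prime power and k ≥ 3, and let P be a point of B(k,q) spanned by a vector of Hamming weight 1. Then every 2-dimensional L-subspace of L^{k-1} containing P contains either exactly one point of B(k,q) (namely P itself) or exactly r + 2 points of B(k,q), and the number of 2-dimensional L-subspaces containing P and at least two points of B(k,q) equals ((r+1)^{k-2} - 1)/r. -/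
open Submodule

section aux
variable {L : Type} [Field L]

structure RGood (R : Set L) : Prop where
  zero : (0:L) ∈ R
  one : (1:L) ∈ R
  mul : ∀ a ∈ R, ∀ b ∈ R, a * b ∈ R
  inv : ∀ a ∈ R, a⁻¹ ∈ R

theorem rgood_of_subfields (K F : Subfield L) :
    RGood {z | ∃ x ∈ K, ∃ y ∈ F, z = x * y} := by
  constructor
  · exact ⟨0, K.zero_mem, 0, F.zero_mem, by ring⟩
  · exact ⟨1, K.one_mem, 1, F.one_mem, by ring⟩
  · rintro a ⟨x, hx, y, hy, rfl⟩ b ⟨x', hx', y', hy', rfl⟩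
    exact ⟨x * x', K.mul_mem hx hx', y * y', F.mul_mem hy hy', by ring⟩
  · rintro a ⟨x, hx, y, hy, rfl⟩
    exact ⟨x⁻¹, K.inv_mem hx, y⁻¹, F.inv_mem hy, by rw [mul_inv]⟩

theorem RGood.mul_mem_iff {R : Set L} (h : RGood R) {a : L} (ha : a ∈ R) (ha0 : a ≠ 0)
    (b : L) : a * b ∈ R ↔ b ∈ R := by
  constructor
  · intro hab
    have := h.mul _ (h.inv _ ha) _ hab
    rwa [← mul_assoc, inv_mul_cancel₀ ha0, one_mul] at this
  · exact h.mul _ ha _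

end aux

section main
variable {L : Type} [Field L] {R : Set L} {n : ℕ}

theorem line_inter (hR : RGood R) (i0 : Fin n) (w : Fin n → L)
    (hw : ∀ i, w i ∈ R) (hw0 : w i0 = 0) (hwne : w ≠ 0) :
    {Q ∈ {P : Submodule L (Fin n → L) | ∃ u : Fin n → L, u ≠ 0 ∧ (∀ i, u i ∈ R) ∧
        P = Submodule.span L {u}} | Q ≤ span L {Pi.single i0 1, w}} =
      insert (span L {(Pi.single i0 1 : Fin n → L)})
        ((fun γ : L => span L {γ • (Pi.single i0 1 : Fin n → L) + w}) '' R) := by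
  set e : Fin n → L := Pi.single i0 (1:L) with he
  obtain ⟨j, hj⟩ := Function.ne_iff.mp hwne
  simp only [Pi.zero_apply] at hj
  have hji0 : j ≠ i0 := fun h => hj (h ▸ hw0)
  have hei0 : e i0 = 1 := Pi.single_eq_same i0 1
  have hej : e j = 0 := Pi.single_eq_of_ne hji0 1
  ext Q
  simp only [Set.mem_setOf_eq, Set.mem_insert_iff, Set.mem_image]
  constructor
  · rintro ⟨⟨u, hu0, huR, rfl⟩, hle⟩
    have hu : u ∈ span L {e, w} := hle (Submodule.mem_span_singleton_self u)
    obtain ⟨a, b, hab⟩ := Submodule.mem_span_pair.mp hu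
    by_cases hb : b = 0
    · left
      subst hb; rw [zero_smul, add_zero] at hab
      have ha : a ≠ 0 := by rintro rfl; rw [zero_smul] at hab; exact hu0 hab.symm
      rw [← hab, Submodule.span_singleton_smul_eq (isUnit_iff_ne_zero.mpr ha)]
    · right
      have hai : a = u i0 := by
        have := congrFun hab i0
        simpa [hw0, hei0] using this
      have hbj : b * w j = u j := by
        have := congrFun hab j
        simpa [hej] using this
      have hbR : b ∈ R := by
        have h1 : w j * b ∈ R := by rw [mul_comm, hbj]; exact huR j
        exact (hR.mul_mem_iff (hw j) hj b).mp h1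
      have haR : a ∈ R := hai ▸ huR i0
      refine ⟨a * b⁻¹, hR.mul _ haR _ (hR.inv _ hbR), ?_⟩
      have hkey : b • ((a * b⁻¹) • e + w) = a • e + b • w := by
        rw [smul_add, smul_smul]
        congr 1
        rw [mul_comm a b⁻¹, ← mul_assoc, mul_inv_cancel₀ hb, one_mul]
      have hrepr : u = b • ((a * b⁻¹) • e + w) := by rw [hkey, hab]
      rw [hrepr, Submodule.span_singleton_smul_eq (isUnit_iff_ne_zero.mpr hb)]
  · have heB : ∀ γ ∈ R, ∃ u : Fin n → L, u ≠ 0 ∧ (∀ i, u i ∈ R) ∧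
        span L {γ • e + w} = Submodule.span L {u} := by
      intro γ hγ
      refine ⟨γ • e + w, ?_, ?_, rfl⟩
      · intro h
        have := congrFun h j
        simp [hej, hj] at this
      · intro i
        by_cases hi : i = i0
        · subst hi; simpa [hei0, hw0] using hγ
        · simpa [he, Pi.single_eq_of_ne hi] using hw i
    rintro (rfl | ⟨γ, hγ, rfl⟩)
    · constructor
      · refine ⟨e, ?_, ?_, rfl⟩
        · intro h
          have := congrFun h i0
          simp [hei0] at this
        · intro i
          by_cases hi : i = i0
          · subst hi; simpa [hei0] using hR.one
          · simpa [he, Pi.single_eq_of_ne hi] using hR.zero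
      · exact Submodule.span_mono (by simp)
    · refine ⟨heB γ hγ, ?_⟩
      rw [Submodule.span_singleton_le_iff_mem]
      exact Submodule.mem_span_pair.mpr ⟨γ, 1, by rw [one_smul]⟩
end main

section main2
variable {L : Type} [Field L] {R : Set L} {n : ℕ}

-- finiteness of submodule lattice
example [Finite L] : Finite (Submodule L (Fin n → L)) := by infer_instance

theorem span_smul_pair (e w : Fin n → L) {c : L} (hc : c ≠ 0) :
    span L {e, c • w} = span L {e, w} := by
  apply le_antisymm
  · rw [span_le, Set.insert_subset_iff]
    constructor
    · exact subset_span (Set.mem_insert _ _)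
    · exact Set.singleton_subset_iff.mpr
        (Submodule.smul_mem _ c (subset_span (Set.mem_insert_of_mem _ rfl)))
  · rw [span_le, Set.insert_subset_iff]
    constructor
    · exact subset_span (Set.mem_insert _ _)
    · have h1 : c • w ∈ span L {e, c • w} := subset_span (Set.mem_insert_of_mem _ rfl)
      have h2 := Submodule.smul_mem _ c⁻¹ h1
      rw [smul_smul, inv_mul_cancel₀ hc, one_smul] at h2
      exact Set.singleton_subset_iff.mpr h2

theorem line_finrank (i0 : Fin n) (w : Fin n → L) (hw0 : w i0 = 0) (hwne : w ≠ 0) :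
    Module.finrank L ↥(span L {(Pi.single i0 1 : Fin n → L), w}) = 2 := by
  have hli : LinearIndependent L ![(Pi.single i0 1 : Fin n → L), w] := by
    rw [LinearIndependent.pair_iff]
    intro s t hst
    have h1 := congrFun hst i0
    simp [Pi.single_eq_same, hw0] at h1
    subst h1
    rw [zero_smul, zero_add] at hst
    rcases smul_eq_zero.mp hst with h | h
    · exact ⟨rfl, h⟩
    · exact absurd h hwne
  have := finrank_span_eq_card hli
  rwa [Matrix.range_cons_cons_empty, Fintype.card_fin] at this

theorem fiber_scalar (hR : RGood R) (i0 : Fin n) (w w' : Fin n → L)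
    (hw : ∀ i, w i ∈ R) (hw0 : w i0 = 0) (hwne : w ≠ 0)
    (hw' : ∀ i, w' i ∈ R) (hw'0 : w' i0 = 0) (hw'ne : w' ≠ 0)
    (hspan : span L {(Pi.single i0 1 : Fin n → L), w} =
      span L {(Pi.single i0 1 : Fin n → L), w'}) :
    ∃ c, c ∈ R ∧ c ≠ 0 ∧ w = c • w' := by
  set e : Fin n → L := Pi.single i0 (1:L) with he
  have hmem : w ∈ span L {e, w'} := by
    rw [← hspan]; exact subset_span (by simp)
  obtain ⟨a, b, hab⟩ := Submodule.mem_span_pair.mp hmem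
  have hei0 : e i0 = 1 := Pi.single_eq_same i0 1
  have ha : a = 0 := by
    have := congrFun hab i0
    simpa [hei0, hw'0, hw0] using this
  subst ha
  rw [zero_smul, zero_add] at hab
  have hb : b ≠ 0 := by rintro rfl; rw [zero_smul] at hab; exact hwne hab.symm
  obtain ⟨j, hj⟩ := Function.ne_iff.mp hw'ne
  simp only [Pi.zero_apply] at hj
  have hbR : b ∈ R := by
    have h1 : w' j * b ∈ R := by
      rw [mul_comm]
      have := congrFun hab j
      simp only [Pi.smul_apply, smul_eq_mul] at this
      rw [this]; exact hw j
    exact (hR.mul_mem_iff (hw' j) hj b).mp h1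
  exact ⟨b, hbR, hb, hab.symm⟩

theorem exists_w (hR : RGood R) (i0 : Fin n) (W : Submodule L (Fin n → L))
    (hW2 : Module.finrank L ↥W = 2) (hPW : (Pi.single i0 1 : Fin n → L) ∈ W)
    (Q : Submodule L (Fin n → L))
    (hQ : Q ∈ {P : Submodule L (Fin n → L) | ∃ u : Fin n → L, u ≠ 0 ∧ (∀ i, u i ∈ R) ∧
        P = Submodule.span L {u}})
    (hQW : Q ≤ W) (hQP : Q ≠ span L {(Pi.single i0 1 : Fin n → L)}) :
    ∃ w : Fin n → L, (∀ i, w i ∈ R) ∧ w i0 = 0 ∧ w ≠ 0 ∧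
      W = span L {(Pi.single i0 1 : Fin n → L), w} := by
  set e : Fin n → L := Pi.single i0 (1:L) with he
  have hei0 : e i0 = 1 := Pi.single_eq_same i0 1
  obtain ⟨u, hu0, huR, rfl⟩ := hQ
  refine ⟨u - u i0 • e, ?_, ?_, ?_, ?_⟩
  · intro i
    by_cases hi : i = i0
    · subst hi; simp [hei0, hR.zero]
    · simpa [he, Pi.single_eq_of_ne hi] using huR i
  · simp [hei0]
  · intro hcon
    have hue : u = u i0 • e := by
      have := sub_eq_zero.mp hcon
      exact this
    have hui0 : u i0 ≠ 0 := by
      rintro hz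
      rw [hz, zero_smul] at hue
      exact hu0 hue
    apply hQP
    rw [hue, Submodule.span_singleton_smul_eq (isUnit_iff_ne_zero.mpr hui0)]
  · have hle : span L {e, u - u i0 • e} ≤ W := by
      rw [span_le, Set.insert_subset_iff]
      refine ⟨hPW, ?_⟩
      simp only [Set.singleton_subset_iff, SetLike.mem_coe]
      exact Submodule.sub_mem _ (hQW (Submodule.mem_span_singleton_self u))
        (Submodule.smul_mem _ _ hPW)
    have hne : u - u i0 • e ≠ 0 := by
      intro hcon
      have hue : u = u i0 • e := sub_eq_zero.mp hcon
      have hui0 : u i0 ≠ 0 := by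
        rintro hz; rw [hz, zero_smul] at hue; exact hu0 hue
      exact hQP (by rw [hue, Submodule.span_singleton_smul_eq (isUnit_iff_ne_zero.mpr hui0)])
    have h0 : (u - u i0 • e) i0 = 0 := by simp [hei0]
    have := line_finrank i0 (u - u i0 • e) h0 hne
    exact (Submodule.eq_of_le_of_finrank_eq hle (by rw [this, hW2])).symm

end main2
section cards
variable {L : Type} [Field L] {R : Set L} {n : ℕ}

theorem line_card [Finite L] (hR : RGood R) (i0 : Fin n) (w : Fin n → L)
    (hw : ∀ i, w i ∈ R) (hw0 : w i0 = 0) (hwne : w ≠ 0) :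
    Nat.card ↥{Q ∈ {P : Submodule L (Fin n → L) | ∃ u : Fin n → L, u ≠ 0 ∧
        (∀ i, u i ∈ R) ∧ P = Submodule.span L {u}} |
        Q ≤ span L {(Pi.single i0 1 : Fin n → L), w}} = R.ncard + 1 := by
  rw [line_inter hR i0 w hw hw0 hwne]
  set e : Fin n → L := Pi.single i0 (1:L) with he
  obtain ⟨j, hj⟩ := Function.ne_iff.mp hwne
  simp only [Pi.zero_apply] at hj
  have hji0 : j ≠ i0 := fun h => hj (h ▸ hw0)
  have hej : e j = 0 := Pi.single_eq_of_ne hji0 1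
  have hei0 : e i0 = 1 := Pi.single_eq_same i0 1
  have hnotmem : span L {e} ∉ (fun γ : L => span L {γ • e + w}) '' R := by
    rintro ⟨γ, hγ, hEq⟩
    simp only at hEq
    obtain ⟨c, hc⟩ := Submodule.span_singleton_eq_span_singleton.mp hEq
    have h1 := congrFun hc j
    simp only [Pi.smul_apply, Pi.add_apply, Pi.smul_apply, smul_eq_mul, hej, hj,
      Units.smul_def, mul_zero, zero_add] at h1
    rw [Units.mul_right_eq_zero] at h1
    exact hj h1
  have hinj : Set.InjOn (fun γ : L => span L {γ • e + w}) R := by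
    intro γ hγ γ' hγ' hEq
    simp only at hEq
    obtain ⟨c, hc⟩ := Submodule.span_singleton_eq_span_singleton.mp hEq
    have h1 := congrFun hc j
    simp only [Pi.smul_apply, Pi.add_apply, smul_eq_mul, hej, Units.smul_def,
      mul_zero, zero_add] at h1
    have hc1 : (c : L) = 1 := by
      have := mul_right_cancel₀ hj (h1.trans (one_mul (w j)).symm)
      exact this
    have h2 := congrFun hc i0
    simp only [Pi.smul_apply, Pi.add_apply, smul_eq_mul, hei0, hw0, Units.smul_def,
      mul_one, add_zero, hc1, one_mul] at h2
    exact h2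
  rw [Nat.card_coe_set_eq, Set.ncard_insert_of_notMem hnotmem (Set.toFinite _),
    Set.ncard_image_of_injOn hinj]

theorem card_T0 [Finite L] (hR : RGood R) (i0 : Fin n) :
    {w : Fin n → L | (∀ i, w i ∈ R) ∧ w i0 = 0}.ncard = R.ncard ^ (n - 1) := by
  classical
  have E : ↥{w : Fin n → L | (∀ i, w i ∈ R) ∧ w i0 = 0} ≃ ({j : Fin n // j ≠ i0} → ↥R) :=
    { toFun := fun w j => ⟨w.1 j.1, w.2.1 j.1⟩
      invFun := fun f => ⟨fun i => if h : i = i0 then 0 else (f ⟨i, h⟩ : L), by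
        constructor
        · intro i
          by_cases h : i = i0
          · simp only [h, dif_pos]
            exact hR.zero
          · simp only [dif_neg h]
            exact (f ⟨i, h⟩).2
        · simp⟩
      left_inv := fun w => by
        ext i
        by_cases h : i = i0
        · subst h
          simp [w.2.2]
        · simp [h]
      right_inv := fun f => by
        ext j
        simp [j.2] }
  rw [← Nat.card_coe_set_eq, Nat.card_congr E, Nat.card_fun,
    Nat.card_coe_set_eq, Nat.card_eq_fintype_card]
  congr 1
  rw [Fintype.card_subtype_compl, Fintype.card_subtype_eq, Fintype.card_fin]

end cards
section orbits
variable {L : Type} [Field L] {R : Set L} {n : ℕ}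

theorem count_orbits [Finite L] (hR : RGood R) (i0 : Fin n) :
    ((fun w : Fin n → L => span L {(Pi.single i0 1 : Fin n → L), w}) ''
        {w : Fin n → L | (∀ i, w i ∈ R) ∧ w i0 = 0 ∧ w ≠ 0}).ncard * (R \ {0}).ncard =
      {w : Fin n → L | (∀ i, w i ∈ R) ∧ w i0 = 0 ∧ w ≠ 0}.ncard := by
  classical
  set e : Fin n → L := Pi.single i0 (1:L) with he
  set T : Set (Fin n → L) := {w | (∀ i, w i ∈ R) ∧ w i0 = 0 ∧ w ≠ 0} with hT
  set g : (Fin n → L) → Submodule L (Fin n → L) := fun w => span L {e, w} with hg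
  have hTfin : T.Finite := Set.toFinite _
  have hSfin : (g '' T).Finite := Set.toFinite _
  have hmaps : ∀ w ∈ hTfin.toFinset, g w ∈ hSfin.toFinset := by
    intro w hw
    rw [Set.Finite.mem_toFinset] at hw ⊢
    exact ⟨w, hw, rfl⟩
  have hsum := Finset.card_eq_sum_card_fiberwise hmaps
  have hfib : ∀ W ∈ hSfin.toFinset,
      (hTfin.toFinset.filter (fun w => g w = W)).card = (R \ {0}).ncard := by
    intro W hW
    rw [Set.Finite.mem_toFinset] at hW
    obtain ⟨w0, hw0T, rfl⟩ := hW
    obtain ⟨hw0R, hw0i0, hw0ne⟩ := hw0T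
    obtain ⟨j, hj⟩ := Function.ne_iff.mp hw0ne
    simp only [Pi.zero_apply] at hj
    have hcard : ((hTfin.toFinset.filter (fun w => g w = g w0)) : Finset (Fin n → L)).card
        = {w ∈ T | g w = g w0}.ncard := by
      rw [← Set.ncard_coe_finset]
      congr 1
      ext w
      simp [Set.Finite.mem_toFinset]
    rw [hcard]
    have hseteq : {w ∈ T | g w = g w0} = (fun c : L => c • w0) '' (R \ {0}) := by
      ext w
      constructor
      · rintro ⟨⟨hwR, hwi0, hwne⟩, hspan⟩
        obtain ⟨c, hcR, hc0, hcw⟩ :=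
          fiber_scalar hR i0 w w0 hwR hwi0 hwne hw0R hw0i0 hw0ne hspan
        exact ⟨c, ⟨hcR, hc0⟩, hcw.symm⟩
      · rintro ⟨c, ⟨hcR, hc0⟩, rfl⟩
        simp only [Set.mem_singleton_iff] at hc0
        refine ⟨⟨?_, ?_, ?_⟩, ?_⟩
        · intro i
          exact hR.mul _ hcR _ (hw0R i)
        · simp [hw0i0]
        · exact smul_ne_zero hc0 hw0ne
        · exact span_smul_pair e w0 hc0
    rw [hseteq]
    apply Set.ncard_image_of_injOn
    intro c hc c' hc' hEq
    simp only at hEq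
    have := congrFun hEq j
    simp only [Pi.smul_apply, smul_eq_mul] at this
    exact mul_right_cancel₀ hj this
  rw [Finset.sum_congr rfl hfib, Finset.sum_const, smul_eq_mul] at hsum
  rw [Set.ncard_eq_toFinset_card _ hTfin, Set.ncard_eq_toFinset_card _ hSfin, ← hsum]

end orbits


/-- Let `q` be a prime power and `k ≥ 3`, `L` the finite field with `q^{k(k-1)}` elements,
`K` its subfield with `q^{k-1}` elements, `F` its subfield with `q^k` elements,
`R = {x·y : x ∈ K, y ∈ F}` and `r = |R ∖ {0}|`.  Let `B(k,q)` be the set of points of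
`PG(k-2, q^{k(k-1)})` spanned by a nonzero vector of `R^{k-1}`, and let `P ∈ B(k,q)` be a
point spanned by a vector of Hamming weight 1.  Then every line (`2`-dimensional
`L`-subspace of `L^{k-1}`) through `P` contains either exactly one point of `B(k,q)`
(namely `P` itself) or exactly `r + 2` points of `B(k,q)`, and the number of secant lines
through `P` equals `((r+1)^{k-2} - 1)/r`. -/
theorem weight_one_point_line_intersections
    (p h q k : ℕ) (hp : p.Prime) (hh : 1 ≤ h) (hq : q = p ^ h) (hk : 3 ≤ k)
    (L : Type) [Field L] [Finite L] (hL : Nat.card L = q ^ (k * (k - 1)))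
    (K F : Subfield L) (hK : Nat.card K = q ^ (k - 1)) (hF : Nat.card F = q ^ k)
    (R : Set L) (hR : R = {z | ∃ x ∈ K, ∃ y ∈ F, z = x * y})
    (r : ℕ) (hr : r = Nat.card ↥(R \ {0}))
    (B : Set (Submodule L (Fin (k - 1) → L)))
    (hB : B = {P | ∃ u : Fin (k - 1) → L, u ≠ 0 ∧ (∀ i, u i ∈ R) ∧
      P = Submodule.span L {u}})
    (P : Submodule L (Fin (k - 1) → L)) (hP : P ∈ B)
    (v : Fin (k - 1) → L) (hv : ∀ i, v i ∈ R) (hPv : P = Submodule.span L {v})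
    (hwt : Nat.card {i | v i ≠ 0} = 1) :
    (∀ W : Submodule L (Fin (k - 1) → L), Module.finrank L ↥W = 2 → P ≤ W →
      {Q ∈ B | Q ≤ W} = {P} ∨ Nat.card ↥{Q ∈ B | Q ≤ W} = r + 2) ∧
    Nat.card ↥{W : Submodule L (Fin (k - 1) → L) | Module.finrank L ↥W = 2 ∧ P ≤ W ∧
        2 ≤ Nat.card ↥{Q ∈ B | Q ≤ W}} = ((r + 1) ^ (k - 2) - 1) / r := by
  have hRg : RGood R := hR ▸ rgood_of_subfields K F
  clear hR hL hK hF hq hp hh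
  subst hB hPv
  -- extract the unique support index
  obtain ⟨⟨i0, hi0⟩, huniq⟩ := Nat.card_eq_one_iff_exists.mp hwt
  have hi0' : v i0 ≠ 0 := hi0
  have hzero : ∀ j, j ≠ i0 → v j = 0 := by
    intro j hj
    by_contra hcon
    exact hj (congrArg Subtype.val (huniq ⟨j, hcon⟩))
  set e : Fin (k - 1) → L := Pi.single i0 (1:L) with he
  have hei0 : e i0 = 1 := Pi.single_eq_same i0 1
  have hve_vec : e = (v i0)⁻¹ • v := by
    funext i
    by_cases hi : i = i0
    · subst hi
      simp [hei0, inv_mul_cancel₀ hi0']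
    · simp [he, Pi.single_eq_of_ne hi, hzero i hi]
  have hve : Submodule.span L {v} = Submodule.span L {e} := by
    rw [hve_vec, Submodule.span_singleton_smul_eq
      (isUnit_iff_ne_zero.mpr (inv_ne_zero hi0'))]
  have hrn : r = (R \ {0}).ncard := by rw [hr, Nat.card_coe_set_eq]
  have hRcard : R.ncard = r + 1 := by
    rw [hrn]
    rw [← Set.ncard_diff_singleton_add_one hRg.zero (Set.toFinite _)]
  have hrpos : 1 ≤ r := by
    rw [hrn]
    have : (1:L) ∈ R \ {0} := ⟨hRg.one, by simp⟩
    exact (Set.ncard_pos (Set.toFinite _)).mpr ⟨1, this⟩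
  -- the auxiliary second-point extraction
  have hBsetP : Submodule.span L {v} ∈
      {P : Submodule L (Fin (k-1) → L) | ∃ u : Fin (k-1) → L, u ≠ 0 ∧ (∀ i, u i ∈ R) ∧
        P = Submodule.span L {u}} := hP
  constructor
  · intro W hW2 hPW
    by_cases hset : {Q ∈ {P : Submodule L (Fin (k-1) → L) | ∃ u : Fin (k-1) → L, u ≠ 0 ∧
        (∀ i, u i ∈ R) ∧ P = Submodule.span L {u}} | Q ≤ W} = {Submodule.span L {v}}
    · left; exact hset
    · right
      have hPin : Submodule.span L {v} ∈ {Q ∈ {P : Submodule L (Fin (k-1) → L) |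
          ∃ u : Fin (k-1) → L, u ≠ 0 ∧ (∀ i, u i ∈ R) ∧ P = Submodule.span L {u}} |
          Q ≤ W} := ⟨hBsetP, hPW⟩
      have hsec : ∃ Q ∈ {Q ∈ {P : Submodule L (Fin (k-1) → L) | ∃ u : Fin (k-1) → L,
          u ≠ 0 ∧ (∀ i, u i ∈ R) ∧ P = Submodule.span L {u}} | Q ≤ W},
          Q ≠ Submodule.span L {v} := by
        by_contra hcon
        push_neg at hcon
        exact hset (Set.eq_singleton_iff_unique_mem.mpr ⟨hPin, fun Q hQ => hcon Q hQ⟩)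
      obtain ⟨Q, ⟨hQB, hQW⟩, hQP⟩ := hsec
      have heW : e ∈ W := by
        rw [hve_vec]
        exact Submodule.smul_mem _ _ (hPW (Submodule.mem_span_singleton_self v))
      obtain ⟨w, hwR, hwi0, hwne, hWeq⟩ :=
        exists_w hRg i0 W hW2 heW Q hQB hQW (fun hc => hQP (hc.trans hve.symm))
      subst hWeq
      rw [line_card hRg i0 w hwR hwi0 hwne, hRcard]
  · have hSeq : {W : Submodule L (Fin (k - 1) → L) | Module.finrank L ↥W = 2 ∧
        Submodule.span L {v} ≤ W ∧ 2 ≤ Nat.card ↥{Q ∈ {P : Submodule L (Fin (k-1) → L) |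
          ∃ u : Fin (k-1) → L, u ≠ 0 ∧ (∀ i, u i ∈ R) ∧ P = Submodule.span L {u}} |
          Q ≤ W}} =
        (fun w : Fin (k-1) → L => Submodule.span L {e, w}) ''
          {w : Fin (k-1) → L | (∀ i, w i ∈ R) ∧ w i0 = 0 ∧ w ≠ 0} := by
      ext W
      constructor
      · rintro ⟨hW2, hPW, hcard⟩
        have hsec : ∃ Q ∈ {Q ∈ {P : Submodule L (Fin (k-1) → L) | ∃ u : Fin (k-1) → L,
            u ≠ 0 ∧ (∀ i, u i ∈ R) ∧ P = Submodule.span L {u}} | Q ≤ W},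
            Q ≠ Submodule.span L {v} := by
          by_contra hcon
          push_neg at hcon
          have hone : {Q ∈ {P : Submodule L (Fin (k-1) → L) | ∃ u : Fin (k-1) → L,
              u ≠ 0 ∧ (∀ i, u i ∈ R) ∧ P = Submodule.span L {u}} | Q ≤ W} =
              {Submodule.span L {v}} :=
            Set.eq_singleton_iff_unique_mem.mpr ⟨⟨hBsetP, hPW⟩, fun Q hQ => hcon Q hQ⟩
          rw [hone, Nat.card_coe_set_eq, Set.ncard_singleton] at hcard
          omega
        obtain ⟨Q, ⟨hQB, hQW⟩, hQP⟩ := hsec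
        have heW : e ∈ W := by
          rw [hve_vec]
          exact Submodule.smul_mem _ _ (hPW (Submodule.mem_span_singleton_self v))
        obtain ⟨w, hwR, hwi0, hwne, hWeq⟩ :=
          exists_w hRg i0 W hW2 heW Q hQB hQW (fun hc => hQP (hc.trans hve.symm))
        exact ⟨w, ⟨hwR, hwi0, hwne⟩, hWeq.symm⟩
      · rintro ⟨w, ⟨hwR, hwi0, hwne⟩, rfl⟩
        refine ⟨line_finrank i0 w hwi0 hwne, ?_, ?_⟩
        · rw [hve]
          exact Submodule.span_mono (Set.singleton_subset_iff.mpr (Set.mem_insert _ _))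
        · rw [line_card hRg i0 w hwR hwi0 hwne, hRcard]
          omega
    rw [Nat.card_coe_set_eq, hSeq]
    -- counting
    have hT0 : (0 : Fin (k-1) → L) ∈ {w : Fin (k-1) → L | (∀ i, w i ∈ R) ∧ w i0 = 0} := by
      refine ⟨fun i => ?_, rfl⟩
      simpa using hRg.zero
    have hTdiff : {w : Fin (k-1) → L | (∀ i, w i ∈ R) ∧ w i0 = 0 ∧ w ≠ 0} =
        {w : Fin (k-1) → L | (∀ i, w i ∈ R) ∧ w i0 = 0} \ {0} := by
      ext w
      simp only [Set.mem_setOf_eq, Set.mem_diff, Set.mem_singleton_iff]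
      tauto
    have hTcard : {w : Fin (k-1) → L | (∀ i, w i ∈ R) ∧ w i0 = 0 ∧ w ≠ 0}.ncard =
        (r + 1) ^ (k - 2) - 1 := by
      rw [hTdiff, Set.ncard_diff_singleton_of_mem hT0,
        card_T0 hRg i0, hRcard, Nat.sub_sub]
    have horb := count_orbits hRg i0
    rw [hTcard, ← hrn] at horb
    symm
    exact Nat.div_eq_of_eq_mul_left hrpos horb.symm
end

section
/- Let q be a prime power and k ≥ 2. Then the cardinality of R ∖ {0} = {x·y : x ∈ K ∖ {0}, y ∈ F ∖ {0}} equals (q^{k-1} - 1)(q^k - 1)/(q - 1). -/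
/-- Let `q` be a prime power and `k ≥ 2`, `L` the finite field with `q^{k(k-1)}` elements,
`K` its subfield with `q^{k-1}` elements and `F` its subfield with `q^k` elements, and
`R = {x·y : x ∈ K, y ∈ F}`.  Then `|R ∖ {0}| = (q^{k-1} - 1)(q^k - 1)/(q - 1)`. -/
theorem card_R_star
    (p h q k : ℕ) (hp : p.Prime) (hh : 1 ≤ h) (hq : q = p ^ h) (hk : 2 ≤ k)
    (L : Type) [Field L] [Finite L] (hL : Nat.card L = q ^ (k * (k - 1)))
    (K F : Subfield L) (hK : Nat.card K = q ^ (k - 1)) (hF : Nat.card F = q ^ k)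
    (R : Set L) (hR : R = {z | ∃ x ∈ K, ∃ y ∈ F, z = x * y}) :
    Nat.card ↥(R \ {0}) = (q ^ (k - 1) - 1) * (q ^ k - 1) / (q - 1) := by
  have := Fintype.ofFinite L
  have hq2 : 2 ≤ q := by
    calc 2 ≤ p := hp.two_le
    _ ≤ p ^ h := Nat.le_self_pow (by omega) p
    _ = q := hq.symm
  set a := q ^ (k - 1) - 1 with ha_def
  set b := q ^ k - 1 with hb_def
  set N := q ^ (k * (k - 1)) - 1 with hN_def
  have hqk1 : 2 ≤ q ^ (k - 1) := le_trans hq2 (Nat.le_self_pow (by omega) q)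
  have hqk : 2 ≤ q ^ k := le_trans hq2 (Nat.le_self_pow (by omega) q)
  have hqN : 2 ≤ q ^ (k * (k - 1)) :=
    le_trans hq2 (Nat.le_self_pow (Nat.mul_ne_zero (by omega) (by omega)) q)
  have ha_pos : 0 < a := by omega
  have hb_pos : 0 < b := by omega
  have hN_pos : 0 < N := by omega
  -- divisibilities
  have haN : a ∣ N := by
    have h1 := Nat.sub_dvd_pow_sub_pow (q ^ (k - 1)) 1 k
    rw [one_pow, ← pow_mul, Nat.mul_comm (k - 1) k] at h1
    exact h1
  have hbN : b ∣ N := by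
    have h1 := Nat.sub_dvd_pow_sub_pow (q ^ k) 1 (k - 1)
    rw [one_pow, ← pow_mul] at h1
    exact h1
  -- gcd computation
  have hdvd : (q - 1) ∣ a := by
    simpa using Nat.sub_dvd_pow_sub_pow q 1 (k - 1)
  have hgcd : Nat.gcd a b = q - 1 := by
    have e : q * a = q ^ k - q := by
      have e2 : q * q ^ (k - 1) = q ^ k := by
        rw [← pow_succ']
        congr 1
        omega
      rw [ha_def, Nat.mul_sub, mul_one, e2]
    have hqle : q ≤ q ^ k := Nat.le_self_pow (by omega) q
    have hbe : b = (q - 1) + q * a := by omega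
    rw [hbe, Nat.gcd_add_mul_right_right a (q - 1) q, Nat.gcd_eq_right hdvd]
  -- the unit group
  have hNL : Nat.card Lˣ = N := by rw [Nat.card_units, hL]
  obtain ⟨g, hg⟩ := IsCyclic.exists_ofOrder_eq_natCard (α := Lˣ)
  rw [hNL] at hg
  have hgN : g ^ N = 1 := by rw [← hg]; exact pow_orderOf_eq_one g
  -- roots of unity subgroups
  have key : ∀ d : ℕ, 0 < d → d ∣ N →
      orderOf (g ^ (N / d)) = d ∧ Nat.card (rootsOfUnity d L) = d ∧
      rootsOfUnity d L = Subgroup.zpowers (g ^ (N / d)) := by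
    intro d hd hdN
    have hNd : N / d ∣ N := Nat.div_dvd_of_dvd hdN
    have hord : orderOf (g ^ (N / d)) = d := by
      rw [orderOf_pow, hg, Nat.gcd_eq_right hNd, Nat.div_div_self hdN (by omega)]
    haveI : NeZero d := ⟨by omega⟩
    have hpow : (g ^ (N / d)) ^ d = 1 := by
      rw [← pow_mul, Nat.div_mul_cancel hdN]
      exact hgN
    have hle : Subgroup.zpowers (g ^ (N / d)) ≤ rootsOfUnity d L := by
      rw [Subgroup.zpowers_le, mem_rootsOfUnity]
      exact hpow
    have hcard_le : Nat.card (rootsOfUnity d L) ≤ d := by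
      exact card_rootsOfUnity L d
    have hz : Nat.card (Subgroup.zpowers (g ^ (N / d))) = d := by
      rw [Nat.card_zpowers, hord]
    have heq : Subgroup.zpowers (g ^ (N / d)) = rootsOfUnity d L :=
      Subgroup.eq_of_le_of_card_ge hle (by rw [hz]; exact hcard_le)
    exact ⟨hord, by rw [← heq, hz], heq.symm⟩
  -- identification of unit groups of subfields with roots of unity
  have sub_roots : ∀ (S : Subfield L) (c : ℕ), 0 < c → c ∣ N → Nat.card S = c + 1 →
      ∀ u : Lˣ, u ∈ rootsOfUnity c L ↔ (u : L) ∈ S := by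
    intro S c hc hcN hS
    haveI : NeZero c := ⟨by omega⟩
    set j : Sˣ →* Lˣ := Units.map (S.subtype.toMonoidHom) with hj_def
    have hjinj : Function.Injective j := Units.map_injective Subtype.val_injective
    have hmem : ∀ u : Lˣ, u ∈ j.range ↔ (u : L) ∈ S := by
      intro u
      constructor
      · rintro ⟨w, rfl⟩
        exact SetLike.coe_mem _
      · intro hu
        have hu' : ((u⁻¹ : Lˣ) : L) ∈ S := by
          simpa using S.inv_mem hu
        refine ⟨⟨⟨(u : L), hu⟩, ⟨((u⁻¹ : Lˣ) : L), hu'⟩, ?_, ?_⟩, ?_⟩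
        · exact Subtype.ext (by simp)
        · exact Subtype.ext (by simp)
        · exact Units.ext rfl
    have hcardrange : Nat.card j.range = c := by
      have h1 : Nat.card j.range = Nat.card Sˣ :=
        Nat.card_congr (MonoidHom.ofInjective hjinj).toEquiv.symm
      rw [h1, Nat.card_units, hS, Nat.add_sub_cancel]
    have hle : j.range ≤ rootsOfUnity c L := by
      rintro u ⟨w, rfl⟩
      have hw : w ^ c = 1 := by
        have h2 := pow_card_eq_one' (x := w)
        rwa [Nat.card_units, hS, Nat.add_sub_cancel] at h2
      rw [mem_rootsOfUnity, ← map_pow, hw, map_one]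
    have heq : j.range = rootsOfUnity c L :=
      Subgroup.eq_of_le_of_card_ge hle (by rw [hcardrange, (key c hc hcN).2.1])
    intro u
    rw [← heq]
    exact hmem u
  have hKiff := sub_roots K a ha_pos haN (by rw [hK]; omega)
  have hFiff := sub_roots F b hb_pos hbN (by rw [hF]; omega)
  -- the lcm
  set m := Nat.lcm a b with hm_def
  have hmN : m ∣ N := Nat.lcm_dvd haN hbN
  have hm_pos : 0 < m := Nat.lcm_pos ha_pos hb_pos
  have hgcdN : Nat.gcd (N / a) (N / b) = N / m := by
    have e1 : N / a * (a * b) = N * b := by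
      rw [← mul_assoc, Nat.div_mul_cancel haN]
    have e2 : N / b * (a * b) = N * a := by
      rw [mul_comm a b, ← mul_assoc, Nat.div_mul_cancel hbN]
    have h1 : Nat.gcd (N / a) (N / b) * (a * b) = N * (q - 1) := by
      rw [← Nat.gcd_mul_right, e1, e2, Nat.gcd_mul_left, Nat.gcd_comm b a, hgcd]
    have h2 : N / m * (a * b) = N * (q - 1) := by
      rw [← Nat.gcd_mul_lcm a b, hgcd, mul_comm (q - 1) m, ← mul_assoc,
        Nat.div_mul_cancel hmN, mul_comm]
    exact Nat.eq_of_mul_eq_mul_right (Nat.mul_pos ha_pos hb_pos) (h1.trans h2.symm)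
  obtain ⟨hordm, hcardm, hzm⟩ := key m hm_pos hmN
  -- sup of the two roots-of-unity subgroups
  have hga : g ^ (N / a) ∈ rootsOfUnity a L := by
    rw [mem_rootsOfUnity, ← pow_mul, Nat.div_mul_cancel haN]
    exact hgN
  have hgb : g ^ (N / b) ∈ rootsOfUnity b L := by
    rw [mem_rootsOfUnity, ← pow_mul, Nat.div_mul_cancel hbN]
    exact hgN
  have hsup : rootsOfUnity a L ⊔ rootsOfUnity b L = rootsOfUnity m L := by
    refine le_antisymm (sup_le (rootsOfUnity_le_of_dvd (Nat.dvd_lcm_left a b))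
      (rootsOfUnity_le_of_dvd (Nat.dvd_lcm_right a b))) ?_
    rw [hzm, Subgroup.zpowers_le, ← hgcdN]
    have hbez : g ^ (Nat.gcd (N / a) (N / b)) =
        (g ^ (N / a)) ^ (Nat.gcdA (N / a) (N / b)) *
        (g ^ (N / b)) ^ (Nat.gcdB (N / a) (N / b)) := by
      rw [← zpow_natCast g (Nat.gcd (N / a) (N / b)), Nat.gcd_eq_gcd_ab, zpow_add,
        zpow_mul, zpow_mul, zpow_natCast, zpow_natCast]
    rw [hbez]
    exact mul_mem (Subgroup.zpow_mem _ (Subgroup.mem_sup_left hga) _)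
      (Subgroup.zpow_mem _ (Subgroup.mem_sup_right hgb) _)
  -- the set R \ {0}
  have hset : R \ {0} = (fun u : Lˣ => (u : L)) '' (rootsOfUnity m L : Set Lˣ) := by
    ext z
    simp only [Set.mem_diff, Set.mem_singleton_iff, hR, Set.mem_setOf_eq, Set.mem_image,
      SetLike.mem_coe]
    constructor
    · rintro ⟨⟨x, hx, y, hy, rfl⟩, hz0⟩
      have hx0 : x ≠ 0 := fun h => hz0 (by simp [h])
      have hy0 : y ≠ 0 := fun h => hz0 (by simp [h])
      refine ⟨Units.mk0 x hx0 * Units.mk0 y hy0, ?_, by simp⟩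
      rw [← hsup]
      exact mul_mem (Subgroup.mem_sup_left ((hKiff _).mpr hx))
        (Subgroup.mem_sup_right ((hFiff _).mpr hy))
    · rintro ⟨u, hu, rfl⟩
      rw [← hsup, Subgroup.mem_sup] at hu
      obtain ⟨v, hv, w, hw, rfl⟩ := hu
      exact ⟨⟨v, (hKiff v).mp hv, w, (hFiff w).mp hw, by simp⟩, Units.ne_zero _⟩
  -- conclude
  rw [hset, Nat.card_image_of_injective Units.val_injective, SetLike.coe_sort_coe, hcardm]
  have hfin : m * (q - 1) = a * b := by
    rw [← hgcd, mul_comm, Nat.gcd_mul_lcm]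
  rw [← hfin, Nat.mul_div_cancel _ (by omega : 0 < q - 1)]
end

section
/- Let q be a prime power and k ≥ 2, and let r = |R ∖ {0}|. Then the number of points of PG(k-2, q^{k(k-1)}) spanned by a nonzero vector of R^{k-1}, i.e., the cardinality of B(k,q), equals ((r+1)^{k-1} - 1)/r. -/
/-- Let `q` be a prime power and `k ≥ 2`, `L` the finite field with `q^{k(k-1)}` elements,
`K` its subfield with `q^{k-1}` elements and `F` its subfield with `q^k` elements,
`R = {x·y : x ∈ K, y ∈ F}` and `r = |R ∖ {0}|`.  Then `B(k,q)`, the set of points of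
`PG(k-2, q^{k(k-1)})` spanned by a nonzero vector of `R^{k-1}`, has cardinality
`((r+1)^{k-1} - 1)/r`. -/
theorem card_Bkq
    (p h q k : ℕ) (hp : p.Prime) (hh : 1 ≤ h) (hq : q = p ^ h) (hk : 2 ≤ k)
    (L : Type) [Field L] [Finite L] (hL : Nat.card L = q ^ (k * (k - 1)))
    (K F : Subfield L) (hK : Nat.card K = q ^ (k - 1)) (hF : Nat.card F = q ^ k)
    (R : Set L) (hR : R = {z | ∃ x ∈ K, ∃ y ∈ F, z = x * y})
    (r : ℕ) (hr : r = Nat.card ↥(R \ {0}))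
    (B : Set (Submodule L (Fin (k - 1) → L)))
    (hB : B = {P | ∃ u : Fin (k - 1) → L, u ≠ 0 ∧ (∀ i, u i ∈ R) ∧
      P = Submodule.span L {u}}) :
    Nat.card ↥B = ((r + 1) ^ (k - 1) - 1) / r := by
  classical
  -- basic membership facts about R
  have h0R : (0:L) ∈ R := by
    rw [hR]; exact ⟨0, K.zero_mem, 1, F.one_mem, by ring⟩
  have h1R : (1:L) ∈ R := by
    rw [hR]; exact ⟨1, K.one_mem, 1, F.one_mem, by ring⟩
  -- R is closed under scaling by (inverses of) nonzero elements of R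
  have hmul : ∀ c ∈ R, c ≠ 0 → ∀ l : L, (l * c ∈ R ↔ l ∈ R) := by
    intro c hc hc0 l
    rw [hR] at hc
    obtain ⟨x, hx, y, hy, rfl⟩ := hc
    have hx0 : x ≠ 0 := fun hxx => hc0 (by simp [hxx])
    have hy0 : y ≠ 0 := fun hyy => hc0 (by simp [hyy])
    constructor
    · intro hl
      rw [hR] at hl ⊢
      obtain ⟨x', hx', y', hy', hxy⟩ := hl
      refine ⟨x' * x⁻¹, K.mul_mem hx' (K.inv_mem hx), y' * y⁻¹, F.mul_mem hy' (F.inv_mem hy), ?_⟩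
      field_simp
      linear_combination hxy
    · intro hl
      rw [hR] at hl ⊢
      obtain ⟨x', hx', y', hy', rfl⟩ := hl
      exact ⟨x' * x, K.mul_mem hx' hx, y' * y, F.mul_mem hy' hy, by ring⟩
  -- cardinality of R
  have hcardR : Nat.card ↥R = r + 1 := by
    rw [hr, Nat.card_coe_set_eq, Nat.card_coe_set_eq,
      Set.ncard_diff_singleton_add_one h0R R.toFinite]
  have rpos : 0 < r := by
    rw [hr, Nat.card_coe_set_eq]
    rw [Set.ncard_pos (R \ {0}).toFinite]
    exact ⟨1, h1R, by simp⟩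
  -- the set of nonzero R-vectors
  set V : Set (Fin (k - 1) → L) := {u | (∀ i, u i ∈ R) ∧ u ≠ 0} with hV
  -- cardinality of the set of all R-vectors
  have hcardRvec : Nat.card ↥{u : Fin (k - 1) → L | ∀ i, u i ∈ R} = (r + 1) ^ (k - 1) := by
    have e : {u : Fin (k - 1) → L | ∀ i, u i ∈ R} ≃ (Fin (k - 1) → ↥R) :=
      { toFun := fun u i => ⟨u.1 i, u.2 i⟩
        invFun := fun w => ⟨fun i => (w i).1, fun i => (w i).2⟩
        left_inv := fun _ => rfl
        right_inv := fun _ => rfl }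
    rw [Nat.card_congr e, Nat.card_pi]
    simp [hcardR]
  have hcardV : Nat.card ↥V = (r + 1) ^ (k - 1) - 1 := by
    have hVeq : V = {u : Fin (k - 1) → L | ∀ i, u i ∈ R} \ {0} := by
      ext u
      constructor
      · exact fun hu => ⟨hu.1, hu.2⟩
      · exact fun hu => ⟨hu.1, hu.2⟩
    have h0mem : (0 : Fin (k - 1) → L) ∈ {u : Fin (k - 1) → L | ∀ i, u i ∈ R} :=
      fun i => h0R
    rw [hVeq, Nat.card_coe_set_eq,
      Set.ncard_diff_singleton_of_mem h0mem,
      ← Nat.card_coe_set_eq, hcardRvec]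
  -- choose a representative vector for each point in B
  have hrep : ∀ P : Submodule L (Fin (k - 1) → L), P ∈ B → ∃ u : Fin (k - 1) → L,
      u ≠ 0 ∧ (∀ i, u i ∈ R) ∧ P = Submodule.span L {u} := by
    intro P hP
    rw [hB] at hP
    exact hP
  choose w0 hw00 hw0R hw0span using hrep
  set w : ↥B → Fin (k - 1) → L := fun P => w0 P.1 P.2 with hwdef
  have hw0 : ∀ P : ↥B, w P ≠ 0 := fun P => hw00 P.1 P.2
  have hwR : ∀ (P : ↥B) i, w P i ∈ R := fun P => hw0R P.1 P.2
  have hwspan : ∀ P : ↥B, (P : Submodule L (Fin (k - 1) → L)) = Submodule.span L {w P} :=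
    fun P => hw0span P.1 P.2
  -- the bijection between B × (R \ {0}) and V
  have key : Nat.card ↥B * r = (r + 1) ^ (k - 1) - 1 := by
    have Φ : ↥B × ↥(R \ {0}) ≃ ↥V := by
      refine Equiv.ofBijective (fun z => ⟨(z.2 : L) • w z.1, ?_, ?_⟩) ⟨?_, ?_⟩
      · intro i
        have hlam : (z.2 : L) ∈ R \ {0} := z.2.2
        simp only [Pi.smul_apply, smul_eq_mul]
        by_cases hwi : w z.1 i = 0
        · simpa [hwi] using h0R
        · exact (hmul _ (hwR z.1 i) hwi _).2 hlam.1
      · have hlam : (z.2 : L) ∈ R \ {0} := z.2.2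
        exact smul_ne_zero hlam.2 (hw0 z.1)
      · rintro ⟨P, l⟩ ⟨Q, m⟩ hEq
        have hl : (l : L) ∈ R \ {0} := l.2
        have hm : (m : L) ∈ R \ {0} := m.2
        have hEq' : (l : L) • w P = (m : L) • w Q := by
          simpa using congrArg Subtype.val hEq
        have hPQ : P = Q := by
          apply Subtype.ext
          have h1 : (P : Submodule L (Fin (k - 1) → L)) =
              Submodule.span L {(l : L) • w P} := by
            rw [hwspan P, Submodule.span_singleton_smul_eq (IsUnit.mk0 _ hl.2)]
          have h2 : (Q : Submodule L (Fin (k - 1) → L)) =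
              Submodule.span L {(m : L) • w Q} := by
            rw [hwspan Q, Submodule.span_singleton_smul_eq (IsUnit.mk0 _ hm.2)]
          rw [h1, h2, hEq']
        subst hPQ
        have hlm : (l : L) = (m : L) := smul_left_injective L (hw0 P) hEq'
        exact Prod.ext rfl (Subtype.ext hlm)
      · rintro ⟨u, huR, hu0⟩
        have hPB : Submodule.span L {u} ∈ B := by
          rw [hB]; exact ⟨u, hu0, huR, rfl⟩
        set P : ↥B := ⟨Submodule.span L {u}, hPB⟩ with hP
        have huP : u ∈ Submodule.span L {w P} := by
          rw [← hwspan P]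
          exact Submodule.mem_span_singleton_self u
        obtain ⟨l, hl⟩ := Submodule.mem_span_singleton.1 huP
        have hl0 : l ≠ 0 := by
          rintro rfl
          exact hu0 (by simpa using hl.symm)
        have hlR : l ∈ R := by
          obtain ⟨j, hj⟩ := Function.ne_iff.1 (hw0 P)
          have hmem : l * w P j ∈ R := by
            have hcj := congrFun hl j
            simp only [Pi.smul_apply, smul_eq_mul] at hcj
            rw [hcj]; exact huR j
          exact (hmul _ (hwR P j) (by simpa using hj) l).1 hmem
        exact ⟨⟨P, ⟨l, hlR, hl0⟩⟩, Subtype.ext hl⟩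
    have hc := Nat.card_congr Φ
    rw [Nat.card_prod, hcardV] at hc
    rw [← hc, hr]
  exact (Nat.div_eq_of_eq_mul_left rpos key.symm).symm
end
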